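/- For the quadratic polynomial q₂(x) with coefficients given by q₂(x) = A s² + B s + u_i where s = (x - x_i)/h, A = (u_{i-1} - 2u_i + u_{i+1})/2, B = (u_{i+1} - u_{i-1})/2, the smoothness indicator β = Σ_{α=1}^{2} ∫_{x_{i-1/2}}^{x_{i+1/2}} h^{2α-1} (q₂^{(α)}(x))² dx equals (13/12)(u_{i-1} - 2u_i + u_{i+1})² + (1/4)(u_{i-1} - u_{i+1})². -/

import Mathlib

set_option maxHeartbeats 1000000


open intervalIntegral

/-- The Jiang–Shu smoothness indicator of the quadratic interpolant
`q₂(x) = A s² + B s + u_i`, `s = (x - x_i)/h`,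
with `A = (u_{i-1} - 2u_i + u_{i+1})/2` and `B = (u_{i+1} - u_{i-1})/2`,
equals `(13/12)(u_{i-1} - 2u_i + u_{i+1})² + (1/4)(u_{i-1} - u_{i+1})²`. -/
theorem stmt_4 (h xi um1 u0 up1 : ℝ) (hh : 0 < h)
    (q₂ : ℝ → ℝ)
    (hq : q₂ = fun x =>
      ((um1 - 2 * u0 + up1) / 2) * ((x - xi) / h) ^ 2
      + ((up1 - um1) / 2) * ((x - xi) / h) + u0) :
    (∫ x in (xi - h / 2)..(xi + h / 2), h ^ (2 * 1 - 1) * (iteratedDeriv 1 q₂ x) ^ 2)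
      + (∫ x in (xi - h / 2)..(xi + h / 2), h ^ (2 * 2 - 1) * (iteratedDeriv 2 q₂ x) ^ 2)
      = (13 / 12) * (um1 - 2 * u0 + up1) ^ 2 + (1 / 4) * (um1 - up1) ^ 2 := by
  have hne : h ≠ 0 := ne_of_gt hh
  set A : ℝ := (um1 - 2 * u0 + up1) / 2 with hA
  set B : ℝ := (up1 - um1) / 2 with hB
  -- first derivative
  have hd1 : ∀ x : ℝ, HasDerivAt q₂ (2 * A / h ^ 2 * (x - xi) + B / h) x := by
    intro x
    rw [hq]
    have h0 : HasDerivAt (fun x : ℝ => (x - xi) / h) (1 / h) x := by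
      simpa using ((hasDerivAt_id x).sub_const xi).div_const h
    have := (((h0.pow 2).const_mul A).add (h0.const_mul B)).add_const u0
    refine this.congr_deriv ?_
    norm_num
    field_simp
  have hD1 : deriv q₂ = fun x => 2 * A / h ^ 2 * (x - xi) + B / h := by
    funext x; exact (hd1 x).deriv
  have hd2 : ∀ x : ℝ, HasDerivAt (deriv q₂) (2 * A / h ^ 2) x := by
    intro x
    rw [hD1]
    simpa using (((hasDerivAt_id x).sub_const xi).const_mul (2 * A / h ^ 2)).add_const (B / h)
  have hD2 : deriv (deriv q₂) = fun _ : ℝ => 2 * A / h ^ 2 := by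
    funext x; exact (hd2 x).deriv
  have hit1 : iteratedDeriv 1 q₂ = deriv q₂ := iteratedDeriv_one
  have hit2 : iteratedDeriv 2 q₂ = deriv (deriv q₂) := by
    rw [iteratedDeriv_succ, hit1]
  -- first integral
  have I1 : (∫ x in (xi - h / 2)..(xi + h / 2), h ^ (2 * 1 - 1) * (iteratedDeriv 1 q₂ x) ^ 2)
      = (1 / 12) * (2 * A) ^ 2 + B ^ 2 := by
    rw [hit1, hD1]
    have key : ∀ x : ℝ, HasDerivAt
        (fun x : ℝ => h * ((2 * A / h ^ 2) ^ 2 * (x - xi) ^ 3 / 3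
          + 2 * A / h ^ 2 * (B / h) * (x - xi) ^ 2 + (B / h) ^ 2 * (x - xi)))
        (h ^ (2 * 1 - 1) * (2 * A / h ^ 2 * (x - xi) + B / h) ^ 2) x := by
      intro x
      have hx : HasDerivAt (fun x : ℝ => x - xi) 1 x := (hasDerivAt_id x).sub_const xi
      have := ((((hx.pow 3).const_mul ((2 * A / h ^ 2) ^ 2)).div_const 3).add
        ((hx.pow 2).const_mul (2 * A / h ^ 2 * (B / h)))).add
        (hx.const_mul ((B / h) ^ 2)) |>.const_mul h
      refine this.congr_deriv ?_
      simp only [Nat.cast_ofNat, Nat.add_one_sub_one, show (3:ℕ) - 1 = 2 from rfl, pow_one, mul_one]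
      field_simp
      ring
    rw [intervalIntegral.integral_eq_sub_of_hasDerivAt (fun x _ => key x)
      (Continuous.intervalIntegrable (by continuity) _ _)]
    field_simp
    ring
  -- second integral
  have I2 : (∫ x in (xi - h / 2)..(xi + h / 2), h ^ (2 * 2 - 1) * (iteratedDeriv 2 q₂ x) ^ 2)
      = (2 * A) ^ 2 := by
    rw [hit2, hD2]
    rw [intervalIntegral.integral_const]
    field_simp
    have hinv : h ^ 4 * h⁻¹ ^ 4 = 1 := by rw [← mul_pow, mul_inv_cancel₀ hne, one_pow]
    linear_combination (A ^ 2 * 4) * hinv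
  rw [I1, I2, hA, hB]
  ring
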